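/- arXiv:2004.07214 — 10 statements merged into one kernel-verified Lean document; each statement's English description precedes it below -/
import Mathlib

section
/- Let G be the comparability graph of a finite poset P = (V, ≤) of width α (i.e., every antichain of P has cardinality at most α). Then every minimal dominating set D of G satisfies |D| ≤ 2α. -/
open Set

/-- The closed neighborhood `N[v]` of a vertex. -/
def closedNbhd {V : Type*} (G : SimpleGraph V) (v : V) : Set V :=
  insert v (G.neighborSet v)

/-- The closed neighborhood `N[S]` of a set of vertices. -/
def closedNbhdSet {V : Type*} (G : SimpleGraph V) (S : Set V) : Set V :=
  ⋃ v ∈ S, closedNbhd G v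

/-- `D` is a dominating set of `G`. -/
def IsDomSet {V : Type*} (G : SimpleGraph V) (D : Set V) : Prop :=
  ∀ w, w ∈ closedNbhdSet G D

/-- `D` is a minimal dominating set of `G`. -/
def IsMinDomSet {V : Type*} (G : SimpleGraph V) (D : Set V) : Prop :=
  IsDomSet G D ∧ ∀ D' ⊂ D, ¬ IsDomSet G D'

/-- The comparability graph of a poset: distinct vertices are adjacent iff comparable. -/
def compGraph (V : Type*) [PartialOrder V] : SimpleGraph V :=
  SimpleGraph.fromRel (fun x y => x ≤ y)

lemma mem_closedNbhdSet_iff {V : Type*} (G : SimpleGraph V) (S : Set V) (w : V) :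
    w ∈ closedNbhdSet G S ↔ ∃ v ∈ S, w ∈ closedNbhd G v := by
  simp [closedNbhdSet]

lemma comp_mem_closedNbhd {V : Type*} [PartialOrder V] {u w : V}
    (h : u ≤ w ∨ w ≤ u) : w ∈ closedNbhd (compGraph V) u := by
  by_cases he : w = u
  · subst he; exact Set.mem_insert _ _
  · right
    simp only [SimpleGraph.mem_neighborSet, compGraph, SimpleGraph.fromRel_adj]
    exact ⟨fun e => he e.symm, h⟩

/-- If every antichain of a finite poset has at most `α` elements, then every minimal
dominating set `D` of its comparability graph satisfies `|D| ≤ 2α`. -/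
theorem stmt0 {V : Type*} [Fintype V] [PartialOrder V] (α : ℕ)
    (hwidth : ∀ A : Set V, IsAntichain (· ≤ ·) A → A.ncard ≤ α)
    (D : Set V) (hD : IsMinDomSet (compGraph V) D) :
    D.ncard ≤ 2 * α := by
  classical
  set G := compGraph V with hG
  -- private neighbors
  have hpriv : ∀ v ∈ D, ∃ q, q ∈ closedNbhd G v ∧ q ∉ closedNbhdSet G (D \ {v}) := by
    intro v hv
    have hsub : D \ {v} ⊂ D := Set.sdiff_singleton_ssubset.mpr hv
    have hnd := hD.2 _ hsub
    simp only [IsDomSet, not_forall] at hnd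
    obtain ⟨q, hq⟩ := hnd
    refine ⟨q, ?_, hq⟩
    obtain ⟨u, hu, hqu⟩ := (mem_closedNbhdSet_iff G D q).mp (hD.1 q)
    by_cases huv : u = v
    · exact huv ▸ hqu
    · exact absurd ((mem_closedNbhdSet_iff G (D \ {v}) q).mpr ⟨u, ⟨hu, huv⟩, hqu⟩) hq
  choose! p hp1 hp2 using hpriv
  -- every private neighbor is comparable
  have hcmp : ∀ v ∈ D, v ≤ p v ∨ p v ≤ v := by
    intro v hv
    rcases hp1 v hv with h | h
    · exact Or.inl (le_of_eq h.symm)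
    · simp only [SimpleGraph.mem_neighborSet, hG, compGraph, SimpleGraph.fromRel_adj] at h
      exact h.2
  -- privacy: no other member of D is comparable to p v
  have hpvt : ∀ v ∈ D, ∀ u ∈ D, u ≠ v → ¬ (u ≤ p v ∨ p v ≤ u) := by
    intro v hv u hu huv h
    exact hp2 v hv ((mem_closedNbhdSet_iff G _ _).mpr ⟨u, ⟨hu, huv⟩, comp_mem_closedNbhd h⟩)
  set Ap := {v ∈ D | v ≤ p v} with hAp
  set Am := {v ∈ D | p v ≤ v} with hAm
  have hDun : D = Ap ∪ Am := by
    ext v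
    constructor
    · intro hv
      rcases hcmp v hv with h | h
      · exact Or.inl ⟨hv, h⟩
      · exact Or.inr ⟨hv, h⟩
    · rintro (⟨h, _⟩ | ⟨h, _⟩) <;> exact h
  -- p is injective on Ap and Am
  have hinjp : Set.InjOn p Ap := by
    intro u hu v hv he
    by_contra hne
    exact hpvt v hv.1 u hu.1 hne (Or.inl (he ▸ hu.2))
  have hinjm : Set.InjOn p Am := by
    intro u hu v hv he
    by_contra hne
    exact hpvt v hv.1 u hu.1 hne (Or.inr (he ▸ hu.2))
  -- p '' Ap is an antichain
  have hacp : IsAntichain (· ≤ ·) (p '' Ap) := by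
    rintro _ ⟨u, hu, rfl⟩ _ ⟨v, hv, rfl⟩ hne hle
    have huv : u ≠ v := fun e => hne (e ▸ rfl)
    exact hpvt v hv.1 u hu.1 huv (Or.inl (le_trans hu.2 hle))
  have hacm : IsAntichain (· ≤ ·) (p '' Am) := by
    rintro _ ⟨u, hu, rfl⟩ _ ⟨v, hv, rfl⟩ hne hle
    have hvu : v ≠ u := fun e => hne (e ▸ rfl)
    exact hpvt u hu.1 v hv.1 hvu (Or.inr (le_trans hle hv.2))
  have h1 : Ap.ncard ≤ α := by
    rw [← Set.ncard_image_of_injOn hinjp]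
    exact hwidth _ hacp
  have h2 : Am.ncard ≤ α := by
    rw [← Set.ncard_image_of_injOn hinjm]
    exact hwidth _ hacm
  calc D.ncard = (Ap ∪ Am).ncard := by rw [← hDun]
    _ ≤ Ap.ncard + Am.ncard := Set.ncard_union_le _ _
    _ ≤ α + α := Nat.add_le_add h1 h2
    _ = 2 * α := (two_mul α).symm
end

section
/- Let G be the comparability graph of a finite poset P = (V, ≤) and let D be a minimal dominating set of G. Then D contains no three elements x, y, z with x < y < z in P; that is, every chain of P contained in D has at most two elements. -/
open Set

/-- A minimal dominating set of the comparability graph of a finite poset contains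
no three elements `x < y < z`; i.e., chains of the poset inside `D` have at most two
elements. -/
theorem stmt1 {V : Type*} [Fintype V] [PartialOrder V]
    (D : Set V) (hD : IsMinDomSet (compGraph V) D) :
    ∀ x ∈ D, ∀ y ∈ D, ∀ z ∈ D, ¬ (x < y ∧ y < z) := by
  intro x hx y hy z hz ⟨hxy, hyz⟩
  apply hD.2 (D \ {y})
  · constructor
    · intro a ha; exact ha.1
    · intro hsub
      exact (hsub hy).2 rfl
  · intro w
    obtain ⟨v, hv, hw⟩ := mem_iUnion₂.1 (hD.1 w)
    by_cases hvy : v = y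
    · subst hvy
      rcases hw with rfl | hw
      · -- w = y (now v), dominated by x
        refine mem_iUnion₂.2 ⟨x, ⟨hx, hxy.ne⟩, Or.inr ?_⟩
        exact ⟨hxy.ne, Or.inl hxy.le⟩
      · -- w adjacent to y
        rcases hw.2 with hle | hle
        · -- y ≤ w, use x
          refine mem_iUnion₂.2 ⟨x, ⟨hx, hxy.ne⟩, Or.inr ?_⟩
          refine ⟨fun h => hw.1 (le_antisymm hle (h ▸ hxy.le)), Or.inl (hxy.le.trans hle)⟩
        · -- w ≤ y, use z
          refine mem_iUnion₂.2 ⟨z, ⟨hz, hyz.ne'⟩, Or.inr ?_⟩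
          exact ⟨(hle.trans_lt hyz).ne', Or.inr (hle.trans hyz.le)⟩
    · exact mem_iUnion₂.2 ⟨v, ⟨hv, hvy⟩, hw⟩
end

section
/- Let P = (V, ≤) be a finite poset of dimension at most d with realizer ≤_1, …, ≤_d, and let G be the incomparability graph of P. Let I be an irredundant set of G with |I| ≥ 3d and border T(I) = (t_1, …, t_{3d}). Then there exists an upward extension of I that is a minimal dominating set of G if and only if there exists a tuple (w_1, …, w_{3d}) with w_i ∈ priv(I, t_i) for every i ∈ {1,…,3d} such that V ∖ N[I] ⊆ N[U(I) ∖ N[{w_1, …, w_{3d}}]], i.e., the set U(I) ∖ N[{w_1, …, w_{3d}}] dominates all vertices of G outside N[I]. -/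
open Set

/-- The set `priv(D, u)` of private neighbors of `u` with respect to `D`:
vertices `v` with `N[v] ∩ D = {u}`. -/
def privSet {V : Type*} (G : SimpleGraph V) (D : Set V) (u : V) : Set V :=
  {v | closedNbhd G v ∩ D = {u}}

/-- The incomparability graph of a poset: distinct vertices are adjacent iff incomparable. -/
def incompGraph (V : Type*) [PartialOrder V] : SimpleGraph V :=
  SimpleGraph.fromRel (fun x y => ¬ x ≤ y ∧ ¬ y ≤ x)

/-- `a : Fin d → V` is the (first) layer of `S` with respect to the linear orders `lin`:
`a i` is the maximum, with respect to the `i`-th linear order, of `S` minus the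
previously chosen entries `a j`, `j < i`. -/
def IsLayer {V : Type*} {d : ℕ} (lin : Fin d → LinearOrder V) (S : Set V)
    (a : Fin d → V) : Prop :=
  ∀ i : Fin d, a i ∈ S \ (a '' {j | j < i}) ∧
    ∀ y ∈ S \ (a '' {j | j < i}), (lin i).le y (a i)

section GraphHelpers

variable {V : Type*}

private lemma mem_cn {G : SimpleGraph V} {x y : V} :
    x ∈ closedNbhd G y ↔ x = y ∨ G.Adj y x := by
  simp [closedNbhd]

private lemma cn_self {G : SimpleGraph V} {y : V} : y ∈ closedNbhd G y :=
  mem_cn.mpr (Or.inl rfl)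

private lemma cn_comm {G : SimpleGraph V} {x y : V} :
    x ∈ closedNbhd G y ↔ y ∈ closedNbhd G x := by
  rw [mem_cn, mem_cn]
  constructor
  · rintro (rfl | h)
    exacts [Or.inl rfl, Or.inr h.symm]
  · rintro (rfl | h)
    exacts [Or.inl rfl, Or.inr h.symm]

private lemma mem_cns {G : SimpleGraph V} {x : V} {S : Set V} :
    x ∈ closedNbhdSet G S ↔ ∃ y ∈ S, x ∈ closedNbhd G y := by
  simp [closedNbhdSet]

private lemma minDom_of {G : SimpleGraph V} {D : Set V}
    (hdom : IsDomSet G D)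
    (h : ∀ u ∈ D, ∃ x, closedNbhd G x ∩ D = {u}) : IsMinDomSet G D := by
  refine ⟨hdom, ?_⟩
  intro D' hss hdom'
  obtain ⟨u, huD, huD'⟩ := Set.exists_of_ssubset hss
  obtain ⟨x, hx⟩ := h u huD
  rcases mem_cns.mp (hdom' x) with ⟨y, hyD', hxy⟩
  have hyN : y ∈ closedNbhd G x := cn_comm.mp hxy
  have hmem : y ∈ closedNbhd G x ∩ D := ⟨hyN, hss.subset hyD'⟩
  rw [hx] at hmem
  have hyu : y = u := hmem
  exact huD' (hyu ▸ hyD')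

end GraphHelpers

section OrderHelpers

variable {V : Type*} [PartialOrder V]

private lemma adj_iff {x y : V} :
    (incompGraph V).Adj x y ↔ x ≠ y ∧ ¬x ≤ y ∧ ¬y ≤ x := by
  simp only [incompGraph, SimpleGraph.fromRel_adj]
  tauto

private lemma comp_of_not_adj {x y : V} (hne : x ≠ y)
    (h : ¬ (incompGraph V).Adj x y) : x ≤ y ∨ y ≤ x := by
  by_contra hc
  push_neg at hc
  exact h (adj_iff.mpr ⟨hne, hc.1, hc.2⟩)

private lemma priv_spec {I : Set V} {t ω : V}
    (h : ω ∈ privSet (incompGraph V) I t) :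
    t ∈ I ∧ t ∈ closedNbhd (incompGraph V) ω ∧
      ∀ x ∈ I, x ∈ closedNbhd (incompGraph V) ω → x = t := by
  have h' : closedNbhd (incompGraph V) ω ∩ I = {t} := h
  have ht : t ∈ closedNbhd (incompGraph V) ω ∩ I := by
    rw [h']; exact Set.mem_singleton t
  refine ⟨ht.2, ht.1, fun x hx hN => ?_⟩
  have : x ∈ ({t} : Set V) := by rw [← h']; exact ⟨hN, hx⟩
  exact this

private lemma priv_comp {I : Set V} {t ω x : V}
    (h : ω ∈ privSet (incompGraph V) I t) (hx : x ∈ I) (hxt : x ≠ t) :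
    x ≠ ω ∧ (x ≤ ω ∨ ω ≤ x) := by
  have hspec := priv_spec h
  have hnN : x ∉ closedNbhd (incompGraph V) ω := fun hN => hxt (hspec.2.2 x hx hN)
  rw [mem_cn] at hnN
  push_neg at hnN
  refine ⟨hnN.1, ?_⟩
  exact comp_of_not_adj hnN.1 (fun hadj => hnN.2 hadj.symm)

private lemma layer_inj {d : ℕ} {lin : Fin d → LinearOrder V} {S : Set V}
    {f : Fin d → V} (hf : IsLayer lin S f) {j k : Fin d} (h : j ≠ k) :
    f j ≠ f k := by
  rcases h.lt_or_gt with hlt | hlt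
  · intro he
    exact ((hf k).1).2 ⟨j, hlt, he⟩
  · intro he
    exact ((hf j).1).2 ⟨k, hlt, he.symm⟩

private lemma key_pigeon {d : ℕ} (lin : Fin d → LinearOrder V)
    (hreal : ∀ x y : V, x ≤ y ↔ ∀ i, (lin i).le x y)
    {I : Set V} {κ : Type*} [Fintype κ] (hcard : d < Fintype.card κ)
    (t ω : κ → V) (htI : ∀ k, t k ∈ I)
    (hdist : ∀ k k', k ≠ k' → t k ≠ t k')
    (hpriv : ∀ k, ω k ∈ privSet (incompGraph V) I (t k))
    {z : V} (hz : ∀ k, ¬ t k ≤ z) (hω : ∀ k, ω k ≤ z) : False := by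
  have h : ∀ k : κ, ∃ s : Fin d, ∀ k', k' ≠ k →
      (lin s).le (t k) (t k') ∧ t k ≠ t k' := by
    intro k
    have hspec := priv_spec (hpriv k)
    have hne : ω k ≠ t k := by
      intro he
      exact hz k (he ▸ hω k)
    have hadj : (incompGraph V).Adj (ω k) (t k) := by
      rcases mem_cn.mp hspec.2.1 with he | hadj
      · exact absurd he.symm hne
      · exact hadj
    have h1 : ¬ ω k ≤ t k := (adj_iff.mp hadj).2.1
    rw [hreal] at h1
    push_neg at h1
    obtain ⟨s, hs⟩ := h1
    refine ⟨s, fun k' hk' => ?_⟩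
    have htne : t k ≠ t k' := hdist k k' (fun he => hk' he.symm)
    have hcomp := priv_comp (hpriv k) (htI k') htne.symm
    rcases hcomp.2 with hle | hle
    · exact absurd (hle.trans (hω k)) (hz k')
    · have h2 : (lin s).le (ω k) (t k') := (hreal _ _).mp hle s
      have hts : (lin s).le (t k) (ω k) :=
        ((lin s).le_total (t k) (ω k)).resolve_right (((lin s).lt_iff_le_not_ge _ _).mp hs).2
      exact ⟨(lin s).le_trans _ _ _ hts h2, htne⟩
  choose s hs using h
  have hinj : Function.Injective s := by
    intro k k' he
    by_contra hne
    have h1 := hs k k' (fun h' => hne h'.symm)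
    have h2 := hs k' k hne
    rw [he] at h1
    exact h1.2 ((lin (s k')).le_antisymm _ _ h1.1 h2.1)
  have := Fintype.card_le_of_injective s hinj
  simp only [Fintype.card_fin] at this
  omega

private lemma top_of_U {d : ℕ} (lin : Fin d → LinearOrder V)
    (hreal : ∀ x y : V, x ≤ y ↔ ∀ i, (lin i).le x y)
    {I : Set V} {m : Fin d → V}
    (hm : ∀ i, m i ∈ I ∧ ∀ y ∈ I, (lin i).le y (m i))
    {v : V} (i₀ : Fin d) (hv : (lin i₀).lt (m i₀) v) :
    ∀ x ∈ I, ¬ v ≤ x ∧ v ≠ x := by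
  intro x hx
  have hxm : (lin i₀).le x (m i₀) := (hm i₀).2 x hx
  have hlt := ((lin i₀).lt_iff_le_not_ge (m i₀) v).mp hv
  have hnvx : ¬ (lin i₀).le v x :=
    fun h => hlt.2 ((lin i₀).le_trans _ _ _ h hxm)
  refine ⟨fun h => hnvx ((hreal _ _).mp h i₀), fun h => hnvx ?_⟩
  rw [h]
  exact (lin i₀).le_refl x

private lemma step1 {d : ℕ} (lin : Fin d → LinearOrder V)
    (hreal : ∀ x y : V, x ≤ y ↔ ∀ i, (lin i).le x y)
    {I : Set V} {a : Fin d → V} (ha : IsLayer lin I a)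
    {v : V} (htop : ∀ x ∈ I, ¬ v ≤ x ∧ v ≠ x)
    {t ω : V} (htI : t ∈ I) (hta : t ∉ Set.range a)
    (hw : ω ∈ privSet (incompGraph V) I t)
    (hvω : v ∉ closedNbhd (incompGraph V) ω) : ω ≤ v ∧ ω ≠ v := by
  have hspec := priv_spec hw
  rw [mem_cn] at hvω
  push_neg at hvω
  obtain ⟨hne, hnadj⟩ := hvω
  have hωv : ω ≠ v := fun he => hne he.symm
  have hcomp : v ≤ ω ∨ ω ≤ v :=
    comp_of_not_adj hne (fun hadj => hnadj hadj.symm)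
  rcases hcomp with h | h
  · exfalso
    by_cases hωI : ω ∈ I
    · have he : ω = t := hspec.2.2 ω hωI cn_self
      exact (htop t htI).1 (he ▸ h)
    · have htω : t ≠ ω := fun he => hωI (he ▸ htI)
      have hadj : (incompGraph V).Adj ω t := by
        rcases mem_cn.mp hspec.2.1 with he | hadj
        · exact absurd he htω
        · exact hadj
      have h1 : ¬ t ≤ ω := (adj_iff.mp hadj).2.2
      rw [hreal] at h1
      push_neg at h1
      obtain ⟨ρ, hρ⟩ := h1
      have haI : a ρ ∈ I := ((ha ρ).1).1
      have hat : a ρ ≠ t := fun he => hta ⟨ρ, he⟩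
      have hcomp2 := priv_comp hw haI hat
      have haω : a ρ ≤ ω := by
        rcases hcomp2.2 with h' | h'
        · exact h'
        · exact absurd (h.trans h') (htop (a ρ) haI).1
      have hta' : (lin ρ).le t (a ρ) := by
        refine (ha ρ).2 t ⟨htI, fun hmem => hta ?_⟩
        rcases hmem with ⟨k, _, hk⟩
        exact ⟨k, hk⟩
      exact (((lin ρ).lt_iff_le_not_ge _ _).mp hρ).2 ((lin ρ).le_trans _ _ _ hta' ((hreal _ _).mp haω ρ))
  · exact ⟨h, hωv⟩

private lemma key {d : ℕ} (lin : Fin d → LinearOrder V)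
    (hreal : ∀ x y : V, x ≤ y ↔ ∀ i, (lin i).le x y)
    {I : Set V} {m : Fin d → V}
    (hm : ∀ i, m i ∈ I ∧ ∀ y ∈ I, (lin i).le y (m i))
    {a b c : Fin d → V} (ha : IsLayer lin I a)
    (hb : IsLayer lin (I \ Set.range a) b)
    (hc : IsLayer lin (I \ (Set.range a ∪ Set.range b)) c)
    {u : V} (huI : u ∈ I)
    (hua : u ∉ Set.range a) (hub : u ∉ Set.range b) (huc : u ∉ Set.range c)
    {w : V} (hw : w ∈ privSet (incompGraph V) I u)
    {wb wc : Fin d → V}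
    (hwb : ∀ j, wb j ∈ privSet (incompGraph V) I (b j))
    (hwc : ∀ j, wc j ∈ privSet (incompGraph V) I (c j))
    {v : V} (hvI : v ∉ I) (i₀ : Fin d) (hv : (lin i₀).lt (m i₀) v)
    (hvwb : ∀ j, v ∉ closedNbhd (incompGraph V) (wb j))
    (hvwc : ∀ j, v ∉ closedNbhd (incompGraph V) (wc j))
    (hvw : v ∈ closedNbhd (incompGraph V) w) : False := by
  have htop := top_of_U lin hreal hm i₀ hv
  have hbI : ∀ j, b j ∈ I := fun j => ((hb j).1).1.1
  have hbna : ∀ j, b j ∉ Set.range a := fun j => ((hb j).1).1.2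
  have hcI : ∀ j, c j ∈ I := fun j => ((hc j).1).1.1
  have hcna : ∀ j, c j ∉ Set.range a := fun j h => ((hc j).1).1.2 (Or.inl h)
  have hcnb : ∀ j, c j ∉ Set.range b := fun j h => ((hc j).1).1.2 (Or.inr h)
  have hFb : ∀ j, (lin j).le u (b j) := by
    intro j
    refine (hb j).2 u ⟨⟨huI, hua⟩, fun hmem => hub ?_⟩
    rcases hmem with ⟨k, _, hk⟩
    exact ⟨k, hk⟩
  have hFc : ∀ j, (lin j).le u (c j) := by
    intro j
    refine (hc j).2 u ⟨⟨huI, fun h => h.elim hua hub⟩, fun hmem => huc ?_⟩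
    rcases hmem with ⟨k, _, hk⟩
    exact ⟨k, hk⟩
  have hune_b : ∀ j, u ≠ b j := fun j he => hub ⟨j, he.symm⟩
  have hune_c : ∀ j, u ≠ c j := fun j he => huc ⟨j, he.symm⟩
  have hSb : ∀ j, wb j ≤ v ∧ wb j ≠ v :=
    fun j => step1 lin hreal ha htop (hbI j) (hbna j) (hwb j) (hvwb j)
  have hSc : ∀ j, wc j ≤ v ∧ wc j ≠ v :=
    fun j => step1 lin hreal ha htop (hcI j) (hcna j) (hwc j) (hvwc j)
  by_cases huv : u ≤ v
  · -- Branch 2: u ≤ v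
    have hspecw := priv_spec hw
    have huw_mem : u ∈ closedNbhd (incompGraph V) w := hspecw.2.1
    have hvnew : v ≠ w := by
      intro he
      subst he
      rcases mem_cn.mp huw_mem with he2 | hadj
      · exact hvI (he2 ▸ huI)
      · exact (adj_iff.mp hadj).2.2 huv
    have hadjwv : (incompGraph V).Adj w v := (mem_cn.mp hvw).resolve_left hvnew
    have hwnI : w ∉ I := by
      intro hwI
      have he : w = u := hspecw.2.2 w hwI cn_self
      exact (he ▸ (adj_iff.mp hadjwv).2.1) huv
    have hq' : ¬ w ≤ v := (adj_iff.mp hadjwv).2.1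
    rw [hreal] at hq'
    push_neg at hq'
    obtain ⟨q, hq⟩ := hq'
    have hadjwu : (incompGraph V).Adj w u := by
      have hne : u ≠ w := fun he => hwnI (he ▸ huI)
      rcases mem_cn.mp huw_mem with he | hadj
      · exact absurd he hne
      · exact hadj
    have hr' : ¬ u ≤ w := (adj_iff.mp hadjwu).2.2
    rw [hreal] at hr'
    push_neg at hr'
    obtain ⟨r, hr⟩ := hr'
    have hcrw : c r ≤ w ∨ w ≤ c r :=
      (priv_comp hw (hcI r) (fun he => hune_c r he.symm)).2
    have hwv_blk : ∀ x : V, x ≤ v → ¬ w ≤ x := by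
      intro x hxv hwx
      exact (((lin q).lt_iff_le_not_ge _ _).mp hq).2 ((hreal _ _).mp (hwx.trans hxv) q)
    have hcrw_blk : ¬ c r ≤ w := by
      intro h'
      exact (((lin r).lt_iff_le_not_ge _ _).mp hr).2 ((lin r).le_trans _ _ _ (hFc r) ((hreal _ _).mp h' r))
    have hT'c : ¬ c r ≤ v := by
      intro hcv
      rcases hcrw with h' | h'
      · exact hcrw_blk h'
      · exact hwv_blk (c r) hcv h'
    have hT'b : ∀ j, ¬ b j ≤ v := by
      intro j hbv
      have hbw : b j ≤ w ∨ w ≤ b j :=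
        (priv_comp hw (hbI j) (fun he => hune_b j he.symm)).2
      rcases hbw with h' | h'
      · have h1 : (lin j).le (c r) (b j) := by
          refine (hb j).2 (c r) ⟨⟨hcI r, hcna r⟩, fun hmem => hcnb r ?_⟩
          rcases hmem with ⟨k, _, hk⟩
          exact ⟨k, hk⟩
        have h2 : (lin j).le (c r) w :=
          (lin j).le_trans _ _ _ h1 ((hreal _ _).mp h' j)
        rcases hcrw with h3 | h3
        · exact hcrw_blk h3
        · have h4 : (lin j).le w (c r) := (hreal _ _).mp h3 j
          have he : w = c r := (lin j).le_antisymm _ _ h4 h2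
          exact hwnI (he ▸ hcI r)
      · exact hwv_blk (b j) hbv h'
    have hcard : d < Fintype.card (Option (Fin d)) := by simp
    refine key_pigeon lin hreal (I := I) hcard
      (fun k => Option.elim k (c r) b) (fun k => Option.elim k (wc r) wb)
      (fun k => ?_) (fun k k' hkk' => ?_) (fun k => ?_) (z := v)
      (fun k => ?_) (fun k => ?_)
    · cases k with
      | none => exact hcI r
      | some j => exact hbI j
    · cases k with
      | none =>
        cases k' with
        | none => exact absurd rfl hkk'
        | some j => exact fun he => hcnb r ⟨j, he.symm⟩
      | some j =>
        cases k' with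
        | none => exact fun he => hcnb r ⟨j, he⟩
        | some j' =>
          refine layer_inj hb (fun he => hkk' ?_)
          rw [he]
    · cases k with
      | none => exact hwc r
      | some j => exact hwb j
    · cases k with
      | none => exact hT'c
      | some j => exact hT'b j
    · cases k with
      | none => exact (hSc r).1
      | some j => exact (hSb j).1
  · -- Branch 1: ¬ u ≤ v
    have hωu_b : ∀ j, wb j ≤ u := by
      intro j
      have h := priv_comp (hwb j) huI (hune_b j)
      rcases h.2 with h' | h'
      · exact absurd (h'.trans (hSb j).1) huv
      · exact h'
    have hωu_c : ∀ j, wc j ≤ u := by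
      intro j
      have h := priv_comp (hwc j) huI (hune_c j)
      rcases h.2 with h' | h'
      · exact absurd (h'.trans (hSc j).1) huv
      · exact h'
    have hzb : ∀ j, ¬ b j ≤ u := fun j h =>
      hune_b j ((lin j).le_antisymm _ _ (hFb j) ((hreal _ _).mp h j))
    have hzc : ∀ j, ¬ c j ≤ u := fun j h =>
      hune_c j ((lin j).le_antisymm _ _ (hFc j) ((hreal _ _).mp h j))
    have hcard : d < Fintype.card (Fin d ⊕ Fin d) := by
      have := i₀.pos
      simp only [Fintype.card_sum, Fintype.card_fin]
      omega
    refine key_pigeon lin hreal (I := I) hcard (Sum.elim b c) (Sum.elim wb wc)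
      (fun k => ?_) (fun k k' hkk' => ?_) (fun k => ?_) (z := u)
      (fun k => ?_) (fun k => ?_)
    · cases k with
      | inl j => exact hbI j
      | inr j => exact hcI j
    · cases k with
      | inl j =>
        cases k' with
        | inl j' =>
          refine layer_inj hb (fun he => hkk' ?_)
          rw [he]
        | inr j' => exact fun he => hcnb j' ⟨j, he⟩
      | inr j =>
        cases k' with
        | inl j' => exact fun he => hcnb j ⟨j', he.symm⟩
        | inr j' =>
          refine layer_inj hc (fun he => hkk' ?_)
          rw [he]
    · cases k with
      | inl j => exact hwb j
      | inr j => exact hwc j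
    · cases k with
      | inl j => exact hzb j
      | inr j => exact hzc j
    · cases k with
      | inl j => exact hωu_b j
      | inr j => exact hωu_c j

end OrderHelpers

/-- Theorem (bt-extension): let `P` be a finite poset realized by the linear orders
`lin 1, …, lin d`, let `G` be its incomparability graph, let `I` be an irredundant set
of `G` with `|I| ≥ 3d`, with layers `a`, `b`, `c` forming the border `T(I)`, where
`m i` is the maximum of `I` in the `i`-th order and
`U(I) = {v ∉ I : m i <_i v for some i}`.  Then `I` has an upward extension which is a
minimal dominating set of `G` iff there is a tuple of private neighbors
`w₁ ∈ priv(I,t₁), …, w₃d ∈ priv(I,t₃d)` of the border such that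
`U(I) ∖ N[w₁,…,w₃d]` dominates every vertex outside `N[I]`. -/
theorem stmt3 {V : Type*} [Fintype V] [PartialOrder V] (d : ℕ)
    (lin : Fin d → LinearOrder V)
    (hreal : ∀ x y : V, x ≤ y ↔ ∀ i : Fin d, (lin i).le x y)
    (I : Set V)
    (hirr : ∀ x ∈ I, privSet (incompGraph V) I x ≠ ∅)
    (hcard : 3 * d ≤ I.ncard)
    (m : Fin d → V)
    (hm : ∀ i : Fin d, m i ∈ I ∧ ∀ y ∈ I, (lin i).le y (m i))
    (U : Set V) (hU : U = {v : V | v ∉ I ∧ ∃ i : Fin d, (lin i).lt (m i) v})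
    (a b c : Fin d → V)
    (ha : IsLayer lin I a)
    (hb : IsLayer lin (I \ Set.range a) b)
    (hc : IsLayer lin (I \ (Set.range a ∪ Set.range b)) c) :
    (∃ D : Set V, I ⊆ D ∧ D \ I ⊆ U ∧ IsMinDomSet (incompGraph V) D) ↔
    (∃ wa wb wc : Fin d → V,
      (∀ i, wa i ∈ privSet (incompGraph V) I (a i)) ∧
      (∀ i, wb i ∈ privSet (incompGraph V) I (b i)) ∧
      (∀ i, wc i ∈ privSet (incompGraph V) I (c i)) ∧
      ∀ x : V, x ∉ closedNbhdSet (incompGraph V) I →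
        x ∈ closedNbhdSet (incompGraph V)
          (U \ closedNbhdSet (incompGraph V)
            (Set.range wa ∪ Set.range wb ∪ Set.range wc))) := by
  constructor
  · rintro ⟨D, hID, hDU, hmin⟩
    have hdom := hmin.1
    -- every vertex of a minimal dominating set has a private neighbor
    have hprivD : ∀ u ∈ D, ∃ x, closedNbhd (incompGraph V) x ∩ D = {u} := by
      intro u hu
      by_contra hno
      push_neg at hno
      have hdom' : IsDomSet (incompGraph V) (D \ {u}) := by
        intro x
        rcases mem_cns.mp (hdom x) with ⟨y, hyD, hxy⟩
        by_cases hx : ∃ y' ∈ D, y' ≠ u ∧ x ∈ closedNbhd (incompGraph V) y'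
        · obtain ⟨y', hy'D, hy'ne, hxy'⟩ := hx
          exact mem_cns.mpr ⟨y', ⟨hy'D, hy'ne⟩, hxy'⟩
        · push_neg at hx
          exfalso
          have hyu : y = u := by
            by_contra hne
            exact hx y hyD hne hxy
          refine hno x ?_
          apply Set.Subset.antisymm
          · intro z hz
            by_contra hzu
            exact hx z hz.2 hzu (cn_comm.mp hz.1)
          · intro z hz
            have hz' : z = u := hz
            subst hz'
            exact ⟨cn_comm.mp (hyu ▸ hxy), hyu ▸ hyD⟩
      have hss : D \ {u} ⊂ D :=
        (Set.ssubset_iff_of_subset Set.diff_subset).mpr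
          ⟨u, hu, fun h => h.2 rfl⟩
      exact hmin.2 _ hss hdom'
    have haI : ∀ i, a i ∈ I := fun i => ((ha i).1).1
    have hbI : ∀ i, b i ∈ I := fun i => ((hb i).1).1.1
    have hcI : ∀ i, c i ∈ I := fun i => ((hc i).1).1.1
    choose wa hwa using fun i => hprivD (a i) (hID (haI i))
    choose wb hwb using fun i => hprivD (b i) (hID (hbI i))
    choose wc hwc using fun i => hprivD (c i) (hID (hcI i))
    have hprivI : ∀ (t x : V), t ∈ I →
        closedNbhd (incompGraph V) x ∩ D = {t} →
        x ∈ privSet (incompGraph V) I t := by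
      intro t x htI hx
      show closedNbhd (incompGraph V) x ∩ I = {t}
      apply Set.Subset.antisymm
      · intro z hz
        have hmem : z ∈ closedNbhd (incompGraph V) x ∩ D := ⟨hz.1, hID hz.2⟩
        rw [hx] at hmem
        exact hmem
      · intro z hz
        have hz' : z = t := hz
        subst hz'
        have hmem : z ∈ closedNbhd (incompGraph V) x ∩ D := by
          rw [hx]
          exact Set.mem_singleton z
        exact ⟨hmem.1, htI⟩
    refine ⟨wa, wb, wc, fun i => hprivI _ _ (haI i) (hwa i),
      fun i => hprivI _ _ (hbI i) (hwb i),
      fun i => hprivI _ _ (hcI i) (hwc i), ?_⟩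
    intro x hx
    rcases mem_cns.mp (hdom x) with ⟨y, hyD, hxy⟩
    have hyI : y ∉ I := fun h => hx (mem_cns.mpr ⟨y, h, hxy⟩)
    have hyU : y ∈ U := hDU ⟨hyD, hyI⟩
    refine mem_cns.mpr ⟨y, ⟨hyU, ?_⟩, hxy⟩
    intro hyW
    rcases mem_cns.mp hyW with ⟨z, hzW, hyz⟩
    rcases hzW with (hz | hz) | hz
    · obtain ⟨i, rfl⟩ := hz
      have hmem : y ∈ closedNbhd (incompGraph V) (wa i) ∩ D := ⟨hyz, hyD⟩
      rw [hwa i] at hmem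
      have hy : y = a i := hmem
      exact hyI (hy ▸ haI i)
    · obtain ⟨i, rfl⟩ := hz
      have hmem : y ∈ closedNbhd (incompGraph V) (wb i) ∩ D := ⟨hyz, hyD⟩
      rw [hwb i] at hmem
      have hy : y = b i := hmem
      exact hyI (hy ▸ hbI i)
    · obtain ⟨i, rfl⟩ := hz
      have hmem : y ∈ closedNbhd (incompGraph V) (wc i) ∩ D := ⟨hyz, hyD⟩
      rw [hwc i] at hmem
      have hy : y = c i := hmem
      exact hyI (hy ▸ hcI i)
  · rintro ⟨wa, wb, wc, hwa, hwb, hwc, hcov⟩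
    set W : Set V := Set.range wa ∪ Set.range wb ∪ Set.range wc with hWdef
    set X₀ : Set V := U \ closedNbhdSet (incompGraph V) W with hX₀def
    -- choose a covering subset of X₀ of minimum cardinality
    have hSne : {n | ∃ Y : Set V, (Y ⊆ X₀ ∧ ∀ x, x ∉ closedNbhdSet (incompGraph V) I →
        x ∈ closedNbhdSet (incompGraph V) Y) ∧ Y.ncard = n}.Nonempty :=
      ⟨X₀.ncard, X₀, ⟨Set.Subset.rfl, hcov⟩, rfl⟩
    obtain ⟨X', ⟨hX'sub, hX'cov⟩, hX'card⟩ := Nat.sInf_mem hSne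
    have hminX : ∀ Y : Set V, Y ⊆ X₀ →
        (∀ x, x ∉ closedNbhdSet (incompGraph V) I →
          x ∈ closedNbhdSet (incompGraph V) Y) → X'.ncard ≤ Y.ncard := by
      intro Y h1 h2
      rw [hX'card]
      exact Nat.sInf_le ⟨Y, ⟨h1, h2⟩, rfl⟩
    have hXU : X' ⊆ U := fun x hx => (hX'sub hx).1
    have hUI : ∀ {x : V}, x ∈ U → x ∉ I := by
      intro x hx
      rw [hU] at hx
      exact hx.1
    have hpX : ∀ y ∈ X', ∃ x, x ∉ closedNbhdSet (incompGraph V) I ∧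
        x ∉ closedNbhdSet (incompGraph V) (X' \ {y}) := by
      intro y hy
      by_contra hcon
      push_neg at hcon
      have hle := hminX (X' \ {y}) (fun z hz => hX'sub hz.1) hcon
      have hlt := Set.ncard_diff_singleton_lt_of_mem hy X'.toFinite
      omega
    refine ⟨I ∪ X', Set.subset_union_left, ?_, ?_⟩
    · intro x hx
      rcases hx.1 with h | h
      · exact absurd h hx.2
      · exact hXU h
    · have hdomD : IsDomSet (incompGraph V) (I ∪ X') := by
        intro x
        by_cases hx : x ∈ closedNbhdSet (incompGraph V) I
        · rcases mem_cns.mp hx with ⟨y, hyI, hxy⟩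
          exact mem_cns.mpr ⟨y, Or.inl hyI, hxy⟩
        · rcases mem_cns.mp (hX'cov x hx) with ⟨y, hyX, hxy⟩
          exact mem_cns.mpr ⟨y, Or.inr hyX, hxy⟩
      refine minDom_of hdomD ?_
      intro u hu
      rcases hu with huI | huX
      · -- u ∈ I : find a private neighbor avoiding X'
        obtain ⟨w, hwpriv, hwX⟩ :
            ∃ w, w ∈ privSet (incompGraph V) I u ∧
              ∀ y ∈ X', y ∉ closedNbhd (incompGraph V) w := by
          have hXaway : ∀ wt : V, wt ∈ W →
              ∀ y ∈ X', y ∉ closedNbhd (incompGraph V) wt := by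
            intro wt hwtW y hyX hyN
            exact (hX'sub hyX).2 (mem_cns.mpr ⟨wt, hwtW, hyN⟩)
          by_cases h1 : u ∈ Set.range a
          · obtain ⟨i, rfl⟩ := h1
            exact ⟨wa i, hwa i, hXaway _ (Or.inl (Or.inl ⟨i, rfl⟩))⟩
          · by_cases h2 : u ∈ Set.range b
            · obtain ⟨i, rfl⟩ := h2
              exact ⟨wb i, hwb i, hXaway _ (Or.inl (Or.inr ⟨i, rfl⟩))⟩
            · by_cases h3 : u ∈ Set.range c
              · obtain ⟨i, rfl⟩ := h3
                exact ⟨wc i, hwc i, hXaway _ (Or.inr ⟨i, rfl⟩)⟩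
              · obtain ⟨w, hw⟩ := Set.nonempty_iff_ne_empty.mpr (hirr u huI)
                refine ⟨w, hw, ?_⟩
                intro y hyX hyN
                have hyU : y ∈ U := (hX'sub hyX).1
                rw [hU] at hyU
                obtain ⟨hyI, i₀, hi₀⟩ := hyU
                have hvwb : ∀ j, y ∉ closedNbhd (incompGraph V) (wb j) :=
                  fun j hj => (hX'sub hyX).2
                    (mem_cns.mpr ⟨wb j, Or.inl (Or.inr ⟨j, rfl⟩), hj⟩)
                have hvwc : ∀ j, y ∉ closedNbhd (incompGraph V) (wc j) :=
                  fun j hj => (hX'sub hyX).2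
                    (mem_cns.mpr ⟨wc j, Or.inr ⟨j, rfl⟩, hj⟩)
                exact key lin hreal hm ha hb hc huI h1 h2 h3 hw hwb hwc
                  hyI i₀ hi₀ hvwb hvwc hyN
        have hspec := priv_spec hwpriv
        refine ⟨w, ?_⟩
        apply Set.Subset.antisymm
        · rintro z ⟨hzN, hzD⟩
          rcases hzD with hzI | hzX
          · exact hspec.2.2 z hzI hzN
          · exact absurd hzN (hwX z hzX)
        · intro z hz
          have hz' : z = u := hz
          subst hz'
          exact ⟨hspec.2.1, Or.inl huI⟩
      · -- u ∈ X'
        obtain ⟨x, hxI, hxX⟩ := hpX u huX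
        refine ⟨x, ?_⟩
        apply Set.Subset.antisymm
        · rintro z ⟨hzN, hzD⟩
          have hxz : x ∈ closedNbhd (incompGraph V) z := cn_comm.mp hzN
          rcases hzD with hzI | hzX
          · exact absurd (mem_cns.mpr ⟨z, hzI, hxz⟩) hxI
          · by_contra hzu
            exact hxX (mem_cns.mpr ⟨z, ⟨hzX, hzu⟩, hxz⟩)
        · intro z hz
          have hz' : z = u := hz
          subst hz'
          refine ⟨?_, Or.inr huX⟩
          rcases mem_cns.mp (hX'cov x hxI) with ⟨y, hyX, hxy⟩
          have hyu : y = z := by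
            by_contra hne
            exact hxX (mem_cns.mpr ⟨y, ⟨hyX, hne⟩, hxy⟩)
          exact cn_comm.mp (hyu ▸ hxy)
end

section
/- Let G be a finite graph, D a minimal dominating set of G, u ∈ D a vertex having at least one neighbor in D, and v ∈ priv(D, u). Let X be any maximal independent set of the induced subgraph G[priv(D,u) ∖ N[v]]. Then D' = (D ∖ {u}) ∪ X ∪ {v} is a dominating set of G, and every x ∈ X ∪ {v} satisfies N[x] ∩ D' = {x}, i.e., every vertex of X ∪ {v} is its own private neighbor with respect to D'. -/
open Set

/-- `X` is a maximal independent set of the subgraph of `G` induced by `S`. -/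
def IsMaxIndepOn {V : Type*} (G : SimpleGraph V) (S X : Set V) : Prop :=
  X ⊆ S ∧ (∀ x ∈ X, ∀ y ∈ X, ¬ G.Adj x y) ∧
    ∀ X' ⊆ S, (∀ x ∈ X', ∀ y ∈ X', ¬ G.Adj x y) → X ⊆ X' → X' = X

/-- Flipping: if `D` is a minimal dominating set of `G`, `u ∈ D` has a neighbor in `D`,
`v ∈ priv(D,u)`, and `X` is a maximal independent set of `G[priv(D,u) ∖ N[v]]`, then
`D' = (D ∖ {u}) ∪ X ∪ {v}` is a dominating set of `G` and every vertex of `X ∪ {v}`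
is its own private neighbor with respect to `D'`. -/
theorem stmt4 {V : Type*} [Fintype V] (G : SimpleGraph V)
    (D : Set V) (hD : IsMinDomSet G D)
    (u : V) (hu : u ∈ D) (hnb : ∃ w ∈ D, G.Adj u w)
    (v : V) (hv : v ∈ privSet G D u)
    (X : Set V) (hX : IsMaxIndepOn G (privSet G D u \ closedNbhd G v) X) :
    IsDomSet G ((D \ {u}) ∪ X ∪ {v}) ∧
    ∀ x ∈ X ∪ {v}, closedNbhd G x ∩ ((D \ {u}) ∪ X ∪ {v}) = {x} := by
  obtain ⟨hDdom, -⟩ := hD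
  obtain ⟨hXsub, hXind, hXmax⟩ := hX
  have memN : ∀ a b : V, a ∈ closedNbhd G b ↔ a = b ∨ G.Adj b a := by
    intro a b; simp [closedNbhd, SimpleGraph.mem_neighborSet]
  have symmN : ∀ a b : V, a ∈ closedNbhd G b → b ∈ closedNbhd G a := by
    intro a b h
    rcases (memN a b).mp h with h | h
    · exact (memN b a).mpr (Or.inl h.symm)
    · exact (memN b a).mpr (Or.inr h.symm)
  have hvpriv : closedNbhd G v ∩ D = {u} := hv
  constructor
  · intro w
    have dom := hDdom w
    simp only [closedNbhdSet, mem_iUnion, exists_prop] at dom ⊢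
    obtain ⟨d, hd, hwd⟩ := dom
    by_cases hdu : d = u
    · rw [hdu] at hwd
      by_cases hwv : w ∈ closedNbhd G v
      · exact ⟨v, Or.inr rfl, hwv⟩
      · by_cases hwp : w ∈ privSet G D u
        · have hwS : w ∈ privSet G D u \ closedNbhd G v := ⟨hwp, hwv⟩
          by_cases hadj : ∃ x ∈ X, G.Adj x w
          · obtain ⟨x, hx, ha⟩ := hadj
            exact ⟨x, Or.inl (Or.inr hx), (memN w x).mpr (Or.inr ha)⟩
          · push_neg at hadj
            have hins : insert w X = X := by
              apply hXmax
              · intro z hz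
                rcases hz with rfl | hz
                · exact hwS
                · exact hXsub hz
              · intro a ha b hb
                rcases ha with rfl | ha
                · rcases hb with rfl | hb
                  · exact G.irrefl
                  · intro h; exact hadj b hb h.symm
                · rcases hb with rfl | hb
                  · exact hadj a ha
                  · exact hXind a ha b hb
              · exact subset_insert w X
            have hwX : w ∈ X := hins ▸ mem_insert w X
            exact ⟨w, Or.inl (Or.inr hwX), (memN w w).mpr (Or.inl rfl)⟩
        · have huw : u ∈ closedNbhd G w ∩ D := ⟨symmN w u hwd, hu⟩
          have : ∃ d' ∈ closedNbhd G w ∩ D, d' ≠ u := by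
            by_contra hcon
            push_neg at hcon
            apply hwp
            show closedNbhd G w ∩ D = {u}
            apply Set.eq_singleton_iff_unique_mem.mpr
            exact ⟨huw, hcon⟩
          obtain ⟨d', hd', hne⟩ := this
          exact ⟨d', Or.inl (Or.inl ⟨hd'.2, hne⟩), symmN d' w hd'.1⟩
    · exact ⟨d, Or.inl (Or.inl ⟨hd, hdu⟩), hwd⟩
  · intro x hx
    apply Set.eq_singleton_iff_unique_mem.mpr
    constructor
    · refine ⟨(memN x x).mpr (Or.inl rfl), ?_⟩
      rcases hx with hx | hx
      · exact Or.inl (Or.inr hx)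
      · exact Or.inr hx
    · rintro y ⟨hyN, hyD⟩
      rcases hx with hxX | hxv
      · obtain ⟨hxp, hxv⟩ := hXsub hxX
        rcases hyD with (hy | hy) | hy
        · exfalso
          have : y ∈ closedNbhd G x ∩ D := ⟨hyN, hy.1⟩
          rw [hxp] at this
          exact hy.2 this
        · rcases (memN y x).mp hyN with h | h
          · exact h
          · exact absurd h (hXind x hxX y hy)
        · exfalso
          have hyv : y = v := hy
          subst hyv
          exact hxv (symmN y x hyN)
      · rw [mem_singleton_iff] at hxv
        subst hxv
        rcases hyD with (hy | hy) | hy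
        · exfalso
          have : y ∈ closedNbhd G x ∩ D := ⟨hyN, hy.1⟩
          rw [hvpriv] at this
          exact hy.2 this
        · exact absurd hyN (hXsub hy).2
        · exact hy
end

section
/- Let G be a finite graph, D a minimal dominating set of G, u ∈ D a vertex having at least one neighbor in D, and v ∈ priv(D, u). Let X be a maximal independent set of the induced subgraph G[priv(D,u) ∖ N[v]], and let D' = (D ∖ {u}) ∪ X ∪ {v}. Then for every set D* with X ∪ {v} ⊆ D* ⊆ D', the edge set of G[D*] is a proper subset of the edge set of G[D], and v is an isolated vertex of G[D*]. -/
open Set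

/-- The edge set of the subgraph of `G` induced by `S`. -/
def edgesIn {V : Type*} (G : SimpleGraph V) (S : Set V) : Set (Sym2 V) :=
  {e ∈ G.edgeSet | ∀ x ∈ e, x ∈ S}

/-- With `D` a minimal dominating set, `u ∈ D` having a neighbor in `D`,
`v ∈ priv(D,u)`, `X` a maximal independent set of `G[priv(D,u) ∖ N[v]]` and
`D' = (D ∖ {u}) ∪ X ∪ {v}`: for every `D*` with `X ∪ {v} ⊆ D* ⊆ D'`, the edge set of
`G[D*]` is a proper subset of the edge set of `G[D]` and `v` is isolated in `G[D*]`. -/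
theorem stmt5 {V : Type*} [Fintype V] (G : SimpleGraph V)
    (D : Set V) (hD : IsMinDomSet G D)
    (u : V) (hu : u ∈ D) (hnb : ∃ w ∈ D, G.Adj u w)
    (v : V) (hv : v ∈ privSet G D u)
    (X : Set V) (hX : IsMaxIndepOn G (privSet G D u \ closedNbhd G v) X)
    (D' : Set V) (hD' : D' = (D \ {u}) ∪ X ∪ {v}) :
    ∀ Dstar : Set V, X ∪ {v} ⊆ Dstar → Dstar ⊆ D' →
      edgesIn G Dstar ⊂ edgesIn G D ∧ ∀ w ∈ Dstar, ¬ G.Adj v w := by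

  intro Dstar hsub1 hsub2
  subst hD'
  obtain ⟨w, hwD, huw⟩ := hnb
  have hveq : closedNbhd G v ∩ D = {u} := hv
  obtain ⟨hXsub, hXind, _⟩ := hX
  have hpriv : ∀ a, a ∈ privSet G D u → ∀ b ∈ D, b ∈ closedNbhd G a → b = u := by
    intro a ha b hbD hbN
    have ha' : closedNbhd G a ∩ D = {u} := ha
    have : b ∈ ({u} : Set V) := ha' ▸ ⟨hbN, hbD⟩
    exact this
  have huNv : u ∈ closedNbhd G v := by
    have : u ∈ closedNbhd G v ∩ D := hveq.symm ▸ Set.mem_singleton u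
    exact this.1
  have hvu : v ≠ u := by
    intro h
    have hw : w = u := hpriv v hv w hwD (Set.mem_insert_iff.mpr (Or.inr (h ▸ huw)))
    exact G.loopless.irrefl u (hw ▸ huw)
  have hiso : ∀ a ∈ Dstar, ¬ G.Adj v a := by
    intro a haS hadj
    rcases hsub2 haS with ((hDu | hXa) | hav)
    · exact hDu.2 (hpriv v hv a hDu.1 (Set.mem_insert_iff.mpr (Or.inr hadj)))
    · exact (hXsub hXa).2 (Set.mem_insert_iff.mpr (Or.inr hadj))
    · exact G.loopless.irrefl v ((Set.mem_singleton_iff.mp hav) ▸ hadj)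
  have hvert : ∀ a ∈ Dstar, ∀ b ∈ Dstar, G.Adj a b → a ∈ D ∧ a ≠ u := by
    intro a haS b hbS hab
    rcases hsub2 haS with ((hDu | hXa) | hav)
    · exact ⟨hDu.1, hDu.2⟩
    · exfalso
      rcases hsub2 hbS with ((hbDu | hXb) | hbv)
      · exact hbDu.2 (hpriv a (hXsub hXa).1 b hbDu.1 (Set.mem_insert_iff.mpr (Or.inr hab)))
      · exact hXind a hXa b hXb hab
      · have hb : b = v := Set.mem_singleton_iff.mp hbv
        exact (hXsub hXa).2 (Set.mem_insert_iff.mpr (Or.inr (hb ▸ hab).symm))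
    · have ha : a = v := Set.mem_singleton_iff.mp hav
      exact absurd (ha ▸ hab) (hiso b hbS)
  have hsubE : edgesIn G Dstar ⊆ edgesIn G D := by
    intro e he
    induction e using Sym2.ind with
    | _ x y =>
      obtain ⟨heG, hend⟩ := he
      have hadj : G.Adj x y := G.mem_edgeSet.mp heG
      have hx : x ∈ Dstar := hend x (Sym2.mem_mk_left x y)
      have hy : y ∈ Dstar := hend y (Sym2.mem_mk_right x y)
      refine ⟨heG, ?_⟩
      intro z hz
      rcases Sym2.mem_iff.mp hz with rfl | rfl
      · exact (hvert z hx y hy hadj).1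
      · exact (hvert z hy x hx hadj.symm).1
  have hunotin : u ∉ Dstar := by
    intro huS
    rcases hsub2 huS with ((h1 | h2) | h3)
    · exact h1.2 rfl
    · exact (hXsub h2).2 huNv
    · exact hvu (Set.mem_singleton_iff.mp h3).symm
  refine ⟨⟨hsubE, fun hcon => ?_⟩, fun a haS => hiso a haS⟩
  have hin : s(u, w) ∈ edgesIn G D := by
    refine ⟨G.mem_edgeSet.mpr huw, ?_⟩
    intro z hz
    rcases Sym2.mem_iff.mp hz with rfl | rfl
    · exact hu
    · exact hwD
  exact hunotin ((hcon hin).2 u (Sym2.mem_mk_left u w))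
end

section
/- Let G be the comparability graph of a finite poset P = (V, ≤). Let B ⊆ V and let R ⊆ ↑Max(B) with R ∩ B = ∅. Then the inclusion-minimal subsets D ⊆ R with B ⊆ N[D] are exactly the inclusion-minimal subsets D ⊆ R with Max(B) ⊆ N[D]; that is, the minimal red dominating sets of G(R, B) coincide with the minimal red dominating sets of G(R, Max(B)). -/
open Set

/-- `D` is a minimal red dominating set of `G(R, B)`: an inclusion-minimal subset of `R`
whose closed neighborhood contains `B`. -/
def IsMinRedDom {V : Type*} (G : SimpleGraph V) (R B D : Set V) : Prop :=
  D ⊆ R ∧ B ⊆ closedNbhdSet G D ∧ ∀ D' ⊂ D, ¬ B ⊆ closedNbhdSet G D'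

/-- In the comparability graph of a finite poset, for `B ⊆ V` and `R ⊆ ↑Max(B)` with
`R ∩ B = ∅`, the minimal red dominating sets of `G(R, B)` coincide with the minimal red
dominating sets of `G(R, Max(B))`. -/
theorem stmt7 {V : Type*} [Fintype V] [PartialOrder V] (B R : Set V)
    (MaxB : Set V) (hMaxB : MaxB = {x ∈ B | ∀ y ∈ B, x ≤ y → y = x})
    (hR : R ⊆ {v : V | ∃ s ∈ MaxB, s ≤ v}) (hRB : R ∩ B = ∅) :
    ∀ D : Set V,
      IsMinRedDom (compGraph V) R B D ↔ IsMinRedDom (compGraph V) R MaxB D := by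
  -- key: for D ⊆ R, B ⊆ N[D] ↔ MaxB ⊆ N[D]
  have hMB : MaxB ⊆ B := by rw [hMaxB]; exact fun x hx => hx.1
  have hRB' : ∀ x ∈ R, x ∉ B := by
    intro x hx hxB
    exact absurd (Set.mem_inter hx hxB) (by rw [hRB]; exact notMem_empty x)
  have key : ∀ D : Set V, D ⊆ R →
      (B ⊆ closedNbhdSet (compGraph V) D ↔ MaxB ⊆ closedNbhdSet (compGraph V) D) := by
    intro D hD
    constructor
    · exact fun h => (hMB.trans h)
    · intro h b hb
      -- find maximal element above b
      obtain ⟨m, hm, hmax⟩ := Set.Finite.exists_maximalFor id {y ∈ B | b ≤ y}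
        (Set.toFinite _) ⟨b, hb, le_rfl⟩
      have hmMax : m ∈ MaxB := by
        rw [hMaxB]
        refine ⟨hm.1, fun y hy hmy => ?_⟩
        exact le_antisymm (hmax ⟨hy, hm.2.trans hmy⟩ hmy) hmy
      obtain ⟨d, hdD, hmd⟩ := Set.mem_iUnion₂.1 (h hmMax)
      simp only [closedNbhd, Set.mem_insert_iff, SimpleGraph.mem_neighborSet] at hmd
      have hdR : d ∈ R := hD hdD
      have hdB : d ∉ B := hRB' d hdR
      -- m ≠ d
      have hmd' : m ≤ d := by
        rcases hmd with h1 | h2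
        · exact absurd (hMB hmMax) (h1 ▸ hdB)
        · -- adjacency
          have hadj : (compGraph V).Adj d m := h2
          rw [compGraph, SimpleGraph.fromRel_adj] at hadj
          rcases hadj.2 with hle | hle
          · -- d ≤ m : contradiction
            obtain ⟨s, hs, hsd⟩ := hR hdR
            have hsm : s ≤ m := hsd.trans hle
            have : m = s := by
              rw [hMaxB] at hs
              exact hs.2 m (hMB hmMax) hsm
            have : d = s := le_antisymm (this ▸ hle) hsd
            exact absurd (hMB hs) (this ▸ hdB)
          · exact hle
      -- b ≤ m ≤ d, b ≠ d
      have hbd : b ≤ d := hm.2.trans hmd'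
      have hbne : b ≠ d := fun h => hdB (h ▸ hb)
      refine Set.mem_iUnion₂.2 ⟨d, hdD, Set.mem_insert_iff.2 (Or.inr ?_)⟩
      show (compGraph V).Adj d b
      rw [compGraph, SimpleGraph.fromRel_adj]
      exact ⟨fun hdb => hbne hdb.symm, Or.inr hbd⟩
  intro D
  constructor
  · rintro ⟨hDR, hdom, hmin⟩
    exact ⟨hDR, (key D hDR).1 hdom, fun D' hD' h =>
      hmin D' hD' ((key D' (hD'.subset.trans hDR)).2 h)⟩
  · rintro ⟨hDR, hdom, hmin⟩
    exact ⟨hDR, (key D hDR).2 hdom, fun D' hD' h =>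
      hmin D' hD' ((key D' (hD'.subset.trans hDR)).1 h)⟩
end

section
/- Let G be the comparability graph of a finite poset P = (V, ≤). Let D be a minimal dominating set of G, let u ∈ D have a neighbor in D, let v ∈ priv(D, u) with u ≤ v, let X be a maximal independent set of the induced subgraph G[priv(D,u) ∖ N[v]], and set D' = (D ∖ {u}) ∪ X ∪ {v}. Let Z ⊆ D ∖ {u} be such that priv(D', z) = ∅ for every z ∈ Z and such that D* = D' ∖ Z is a minimal dominating set of G. Define R_1 = {x ∈ D* : u ≤ x and x ∈ priv(D*, x)}, B = V ∖ N[(D* ∖ R_1) ∪ {u}], R_2 = ↑B ∖ N[R_1], and Y = ⋃_{z∈Z} priv(D, z). Then X ⊆ R_1 ∖ {v}, Z ⊆ R_2, and Y ⊆ B. -/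
open Set

lemma mem_cn_s8 {V : Type*} [PartialOrder V] {a b : V} :
    a ∈ closedNbhd (compGraph V) b ↔ a ≤ b ∨ b ≤ a := by
  simp only [closedNbhd, compGraph, Set.mem_insert_iff, SimpleGraph.mem_neighborSet,
    SimpleGraph.fromRel_adj]
  constructor
  · rintro (rfl | ⟨-, h⟩)
    · exact Or.inl le_rfl
    · tauto
  · intro h
    by_cases hab : a = b
    · exact Or.inl hab
    · exact Or.inr ⟨Ne.symm hab, by tauto⟩

lemma cn_symm {V : Type*} (G : SimpleGraph V) {a b : V} (h : a ∈ closedNbhd G b) :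
    b ∈ closedNbhd G a := by
  rcases Set.mem_insert_iff.mp h with rfl | h
  · exact Set.mem_insert _ _
  · exact Set.mem_insert_iff.mpr (Or.inr h.symm)

lemma priv_eq {V : Type*} {G : SimpleGraph V} {D : Set V} {a y : V}
    (h : y ∈ privSet G D a) : closedNbhd G y ∩ D = {a} := h

lemma priv_elim {V : Type*} [PartialOrder V] {D : Set V} {a y w : V}
    (h : y ∈ privSet (compGraph V) D a) (hwD : w ∈ D) (hc : w ≤ y ∨ y ≤ w) : w = a := by
  have : w ∈ closedNbhd (compGraph V) y ∩ D := ⟨mem_cn_s8.mpr hc, hwD⟩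
  rw [priv_eq h] at this
  exact this

lemma priv_self {V : Type*} [PartialOrder V] {D : Set V} {a y : V}
    (h : y ∈ privSet (compGraph V) D a) : a ∈ D ∧ (a ≤ y ∨ y ≤ a) := by
  have : a ∈ closedNbhd (compGraph V) y ∩ D := by rw [priv_eq h]; exact rfl
  exact ⟨this.2, mem_cn_s8.mp this.1⟩

lemma min_priv {V : Type*} {G : SimpleGraph V} {D : Set V} (h : IsMinDomSet G D)
    {d : V} (hd : d ∈ D) : ∃ y, y ∈ privSet G D d := by
  by_contra hc
  push_neg at hc
  refine h.2 (D \ {d}) (Set.sdiff_singleton_ssubset.mpr hd) ?_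
  intro w
  have hw := h.1 w
  simp only [closedNbhdSet, Set.mem_iUnion, exists_prop] at hw ⊢
  obtain ⟨e, he, hwe⟩ := hw
  have hew : e ∈ closedNbhd G w := cn_symm G hwe
  by_cases hx : ∃ x, x ∈ closedNbhd G w ∩ D ∧ x ≠ d
  · obtain ⟨x, ⟨hxc, hxD⟩, hxd⟩ := hx
    exact ⟨x, ⟨hxD, hxd⟩, cn_symm G hxc⟩
  · push_neg at hx
    have hed : e = d := hx e ⟨hew, he⟩
    have : w ∈ privSet G D d := by
      refine Set.eq_singleton_iff_unique_mem.mpr ⟨⟨hed ▸ hew, hed ▸ he⟩, ?_⟩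
      intro x hxm
      exact hx x hxm
    exact absurd this (hc w)

/-- In the comparability graph of a finite poset, with the flipping setup
(`D` minimal dominating, `u ∈ D` with a neighbor in `D`, `v ∈ priv(D,u)`, `u ≤ v`,
`X` a maximal independent set of `G[priv(D,u) ∖ N[v]]`, `D' = (D ∖ {u}) ∪ X ∪ {v}`,
`Z ⊆ D ∖ {u}` consisting of vertices with no private neighbor w.r.t. `D'`, and
`D* = D' ∖ Z` a minimal dominating set), defining
`R₁ = {x ∈ D* : u ≤ x, x ∈ priv(D*,x)}`, `B = V ∖ N[(D* ∖ R₁) ∪ {u}]`,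
`R₂ = ↑B ∖ N[R₁]` and `Y = ⋃_{z ∈ Z} priv(D,z)`, we have
`X ⊆ R₁ ∖ {v}`, `Z ⊆ R₂` and `Y ⊆ B`. -/
theorem stmt8 {V : Type*} [Fintype V] [PartialOrder V]
    (D : Set V) (hD : IsMinDomSet (compGraph V) D)
    (u : V) (hu : u ∈ D) (hnb : ∃ w ∈ D, (compGraph V).Adj u w)
    (v : V) (hv : v ∈ privSet (compGraph V) D u) (huv : u ≤ v)
    (X : Set V)
    (hX : IsMaxIndepOn (compGraph V)
      (privSet (compGraph V) D u \ closedNbhd (compGraph V) v) X)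
    (D' : Set V) (hD' : D' = (D \ {u}) ∪ X ∪ {v})
    (Z : Set V) (hZ : Z ⊆ D \ {u})
    (hZpriv : ∀ z ∈ Z, privSet (compGraph V) D' z = ∅)
    (Dstar : Set V) (hDstar : Dstar = D' \ Z)
    (hmin : IsMinDomSet (compGraph V) Dstar)
    (R1 B R2 Y : Set V)
    (hR1 : R1 = {x ∈ Dstar | u ≤ x ∧ x ∈ privSet (compGraph V) Dstar x})
    (hB : B = univ \ closedNbhdSet (compGraph V) ((Dstar \ R1) ∪ {u}))
    (hR2 : R2 = {w : V | ∃ s ∈ B, s ≤ w} \ closedNbhdSet (compGraph V) R1)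
    (hY : Y = ⋃ z ∈ Z, privSet (compGraph V) D z) :
    X ⊆ R1 \ {v} ∧ Z ⊆ R2 ∧ Y ⊆ B := by
  -- no element of priv(D,u) equals u, or lies in D
  have hPu : ∀ p, p ∈ privSet (compGraph V) D u → p ≠ u := by
    intro p hp hpu
    subst hpu
    obtain ⟨w, hwD, hadj⟩ := hnb
    rw [compGraph, SimpleGraph.fromRel_adj] at hadj
    have hwp : w = p := priv_elim hp hwD (by tauto)
    exact hadj.1 hwp.symm
  have hPD : ∀ p, p ∈ privSet (compGraph V) D u → p ∉ D := fun p hp hpD =>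
    hPu p hp (priv_elim hp hpD (Or.inl le_rfl))
  have hXv : ∀ x ∈ X, x ∉ closedNbhd (compGraph V) v := fun x hx => (hX.1 hx).2
  have hSpriv : ∀ s ∈ insert v X, s ∈ privSet (compGraph V) D u := by
    intro s hs
    rcases Set.mem_insert_iff.mp hs with rfl | hsX
    · exact hv
    · exact (hX.1 hsX).1
  have hSu : ∀ s ∈ insert v X, u ≤ s := by
    intro s hs
    rcases Set.mem_insert_iff.mp hs with rfl | hsX
    · exact huv
    · rcases (priv_self (hX.1 hsX).1).2 with h | h
      · exact h
      · exact absurd (mem_cn_s8.mpr (Or.inl (h.trans huv))) (hXv s hsX)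
  have hD'mem : ∀ w, w ∈ D' ↔ (w ∈ D ∧ w ≠ u) ∨ w ∈ X ∨ w = v := by
    intro w
    rw [hD']
    simp only [Set.mem_union, Set.mem_diff, Set.mem_singleton_iff]
    tauto
  have hSD' : ∀ s ∈ insert v X, s ∈ D' := by
    intro s hs
    rcases Set.mem_insert_iff.mp hs with rfl | hsX
    · exact (hD'mem s).mpr (Or.inr (Or.inr rfl))
    · exact (hD'mem s).mpr (Or.inr (Or.inl hsX))
  have hSDstar : ∀ s ∈ insert v X, s ∈ Dstar := by
    intro s hs
    rw [hDstar]
    exact ⟨hSD' s hs, fun hsZ => hPD s (hSpriv s hs) (hZ hsZ).1⟩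
  have hSR1 : ∀ s ∈ insert v X, s ∈ R1 := by
    intro s hs
    rw [hR1]
    refine ⟨hSDstar s hs, hSu s hs, ?_⟩
    show closedNbhd (compGraph V) s ∩ Dstar = {s}
    refine Set.eq_singleton_iff_unique_mem.mpr
      ⟨⟨mem_cn_s8.mpr (Or.inl le_rfl), hSDstar s hs⟩, ?_⟩
    rintro w ⟨hwc, hwDs⟩
    have hwD' : w ∈ D' := (hDstar ▸ hwDs).1
    rcases (hD'mem w).mp hwD' with ⟨hwD, hwu⟩ | hwX | rfl
    · exact absurd (priv_elim (hSpriv s hs) hwD (mem_cn_s8.mp hwc)) hwu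
    · rcases Set.mem_insert_iff.mp hs with rfl | hsX
      · exact absurd hwc (hXv w hwX)
      · rcases Set.mem_insert_iff.mp hwc with h | h
        · exact h
        · exact absurd h (hX.2.1 s hsX w hwX)
    · rcases Set.mem_insert_iff.mp hs with rfl | hsX
      · rfl
      · exact absurd (mem_cn_s8.mpr (Or.symm (mem_cn_s8.mp hwc))) (hXv s hsX)
  have claim1 : X ⊆ R1 \ {v} := by
    intro x hx
    refine ⟨hSR1 x (Set.mem_insert_iff.mpr (Or.inr hx)), ?_⟩
    simp only [Set.mem_singleton_iff]
    rintro rfl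
    exact hXv x hx (mem_cn_s8.mpr (Or.inl le_rfl))
  have hYB : ∀ z ∈ Z, ∀ y, y ∈ privSet (compGraph V) D z → y ∈ B := by
    intro z hz y hy
    have hzu : z ≠ u := fun h => (hZ hz).2 h
    rw [hB]
    refine ⟨mem_univ y, ?_⟩
    intro hmem
    simp only [closedNbhdSet, Set.mem_iUnion, exists_prop] at hmem
    obtain ⟨w, hw, hyw⟩ := hmem
    rcases hw with hwDs | hwu
    · have hwD' : w ∈ D' := (hDstar ▸ hwDs.1).1
      rcases (hD'mem w).mp hwD' with ⟨hwD, _⟩ | hwX | hwv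
      · have hwz : w = z := priv_elim hy hwD (Or.symm (mem_cn_s8.mp hyw))
        exact (hDstar ▸ hwDs.1).2 (hwz ▸ hz)
      · exact hwDs.2 (hSR1 w (Set.mem_insert_iff.mpr (Or.inr hwX)))
      · exact hwDs.2 (hSR1 w (Set.mem_insert_iff.mpr (Or.inl hwv)))
    · rw [Set.mem_singleton_iff] at hwu
      subst hwu
      exact hzu (priv_elim hy hu (Or.symm (mem_cn_s8.mp hyw))).symm
  have hyle : ∀ z ∈ Z, ∀ y, y ∈ privSet (compGraph V) D z → y ≤ z := by
    intro z hz y hy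
    have hzD : z ∈ D := (hZ hz).1
    have hzu : z ≠ u := fun h => (hZ hz).2 h
    by_cases hyz : y ≤ z
    · exact hyz
    exfalso
    have hzy : z ≤ y := by
      rcases (priv_self hy).2 with h | h
      · exact h
      · exact absurd h hyz
    have hne : closedNbhd (compGraph V) y ∩ D' ≠ {z} := by
      intro h
      exact notMem_empty y (by rw [← hZpriv z hz]; exact h)
    have hzmem : z ∈ closedNbhd (compGraph V) y ∩ D' :=
      ⟨mem_cn_s8.mpr (Or.inl hzy), (hD'mem z).mpr (Or.inl ⟨hzD, hzu⟩)⟩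
    have hex : ∃ d ∈ closedNbhd (compGraph V) y ∩ D', d ≠ z := by
      by_contra hc
      push_neg at hc
      exact hne (Set.eq_singleton_iff_unique_mem.mpr ⟨hzmem, hc⟩)
    obtain ⟨d, ⟨hdc, hdD'⟩, hdz⟩ := hex
    rcases (hD'mem d).mp hdD' with ⟨hdD, _⟩ | hdS
    · exact hdz (priv_elim hy hdD (mem_cn_s8.mp hdc))
    · have hdS' : d ∈ insert v X := by
        rcases hdS with h | h
        · exact Set.mem_insert_iff.mpr (Or.inr h)
        · exact h ▸ Set.mem_insert _ _
      rcases mem_cn_s8.mp hdc with hdy | hyd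
      · exact hzu (priv_elim hy hu (Or.inl ((hSu d hdS').trans hdy))).symm
      · exact hzu (priv_elim (hSpriv d hdS') hzD (Or.inl (hzy.trans hyd)))
  have claim3 : Y ⊆ B := by
    intro y hy
    rw [hY] at hy
    simp only [Set.mem_iUnion, exists_prop] at hy
    obtain ⟨z, hz, hyz⟩ := hy
    exact hYB z hz y hyz
  have claim2 : Z ⊆ R2 := by
    intro z hz
    have hzD : z ∈ D := (hZ hz).1
    have hzu : z ≠ u := fun h => (hZ hz).2 h
    obtain ⟨y, hy⟩ := min_priv hD hzD
    rw [hR2]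
    refine ⟨⟨y, hYB z hz y hy, hyle z hz y hy⟩, ?_⟩
    intro hmem
    simp only [closedNbhdSet, Set.mem_iUnion, exists_prop] at hmem
    obtain ⟨r, hr, hzc⟩ := hmem
    rw [hR1] at hr
    obtain ⟨hrDs, hur, hrpriv⟩ := hr
    have hrZ : r ∉ Z := (hDstar ▸ hrDs).2
    have hzr : z ≠ r := fun h => hrZ (h ▸ hz)
    have hrD' : r ∈ D' := (hDstar ▸ hrDs).1
    rcases (hD'mem r).mp hrD' with ⟨hrD, hru⟩ | hrS
    · obtain ⟨p, hp⟩ := min_priv hD hrD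
      have hpu : ¬(u ≤ p ∨ p ≤ u) := fun h => hru (priv_elim hp hu h).symm
      have hpr' : p ≤ r := by
        rcases (priv_self hp).2 with h | h
        · exact absurd (Or.inl (hur.trans h)) hpu
        · exact h
      rcases mem_cn_s8.mp hzc with hzr' | hrz
      · exact hzr (priv_elim hy hrD (Or.inr ((hyle z hz y hy).trans hzr'))).symm
      · exact hzr (priv_elim hp hzD (Or.inr (hpr'.trans hrz)))
    · have hrS' : r ∈ insert v X := by
        rcases hrS with h | h
        · exact Set.mem_insert_iff.mpr (Or.inr h)
        · exact h ▸ Set.mem_insert _ _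
      exact hzu (priv_elim (hSpriv r hrS') hzD (mem_cn_s8.mp hzc))
  exact ⟨claim1, claim2, claim3⟩
end

section
/- Let G be the comparability graph of a finite poset P = (V, ≤). Let D* be a minimal dominating set of G, let v ∈ D* be an isolated vertex of G[D*], and let u be a neighbor of v with u ≤ v. Define R_1 = {x ∈ D* : u ≤ x and x ∈ priv(D*, x)}, B = V ∖ N[(D* ∖ R_1) ∪ {u}], R_2 = ↑B ∖ N[R_1], and R = (R_1 ∖ {v}) ∪ R_2. If X is an inclusion-minimal subset of R with B ⊆ N[X], then (D* ∖ R_1) ∪ {u} ∪ X is a dominating set of G, and every x ∈ X has a private neighbor in B with respect to (D* ∖ R_1) ∪ {u} ∪ X, i.e., there exists y ∈ B with N[y] ∩ ((D* ∖ R_1) ∪ {u} ∪ X) = {x}. -/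
open Set

/-- In the comparability graph of a finite poset, let `D*` be a minimal dominating set,
`v ∈ D*` isolated in `G[D*]`, and `u` a neighbor of `v` with `u ≤ v`.  With
`R₁ = {x ∈ D* : u ≤ x, x ∈ priv(D*,x)}`, `B = V ∖ N[(D* ∖ R₁) ∪ {u}]`,
`R₂ = ↑B ∖ N[R₁]` and `R = (R₁ ∖ {v}) ∪ R₂`: for every inclusion-minimal `X ⊆ R` with
`B ⊆ N[X]`, the set `(D* ∖ R₁) ∪ {u} ∪ X` is a dominating set of `G` and every `x ∈ X`
has a private neighbor in `B` with respect to it. -/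
theorem stmt10 {V : Type*} [Fintype V] [PartialOrder V]
    (Dstar : Set V) (hDstar : IsMinDomSet (compGraph V) Dstar)
    (v : V) (hv : v ∈ Dstar) (hiso : ∀ w ∈ Dstar, ¬ (compGraph V).Adj v w)
    (u : V) (hu : (compGraph V).Adj u v) (huv : u ≤ v)
    (R1 B R2 R : Set V)
    (hR1 : R1 = {x ∈ Dstar | u ≤ x ∧ x ∈ privSet (compGraph V) Dstar x})
    (hB : B = univ \ closedNbhdSet (compGraph V) ((Dstar \ R1) ∪ {u}))
    (hR2 : R2 = {w : V | ∃ s ∈ B, s ≤ w} \ closedNbhdSet (compGraph V) R1)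
    (hR : R = (R1 \ {v}) ∪ R2)
    (X : Set V) (hX : X ⊆ R ∧ B ⊆ closedNbhdSet (compGraph V) X ∧
      ∀ X' ⊂ X, ¬ B ⊆ closedNbhdSet (compGraph V) X') :
    IsDomSet (compGraph V) ((Dstar \ R1) ∪ {u} ∪ X) ∧
    ∀ x ∈ X, ∃ y ∈ B,
      closedNbhd (compGraph V) y ∩ ((Dstar \ R1) ∪ {u} ∪ X) = {x} := by

  obtain ⟨hXR, hXdom, hXmin⟩ := hX
  have hsym : ∀ a b : V, a ∈ closedNbhd (compGraph V) b → b ∈ closedNbhd (compGraph V) a := by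
    intro a b hab
    simp only [closedNbhd, SimpleGraph.mem_neighborSet, Set.mem_insert_iff] at hab ⊢
    rcases hab with rfl | h
    · exact Or.inl rfl
    · exact Or.inr h.symm
  have hmem : ∀ (S : Set V) (w : V), w ∈ closedNbhdSet (compGraph V) S ↔
      ∃ s ∈ S, w ∈ closedNbhd (compGraph V) s := by
    intro S w; simp [closedNbhdSet]
  constructor
  · intro w
    by_cases hw : w ∈ closedNbhdSet (compGraph V) ((Dstar \ R1) ∪ {u})
    · obtain ⟨s, hs, hws⟩ := (hmem _ _).1 hw
      exact (hmem _ _).2 ⟨s, Or.inl hs, hws⟩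
    · have hwB : w ∈ B := by rw [hB]; exact ⟨mem_univ w, hw⟩
      obtain ⟨s, hs, hws⟩ := (hmem _ _).1 (hXdom hwB)
      exact (hmem _ _).2 ⟨s, Or.inr hs, hws⟩
  · intro x hx
    have hsub : X \ {x} ⊂ X :=
      ⟨diff_subset, fun h => (h hx).2 rfl⟩
    have hnot := hXmin _ hsub
    rw [Set.not_subset] at hnot
    obtain ⟨y, hyB, hyN⟩ := hnot
    refine ⟨y, hyB, ?_⟩
    obtain ⟨x', hx', hyx'⟩ := (hmem _ _).1 (hXdom hyB)
    have hxx : x' = x := by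
      by_contra hne
      exact hyN ((hmem _ _).2 ⟨x', ⟨hx', hne⟩, hyx'⟩)
    subst hxx
    have hyBnot : y ∉ closedNbhdSet (compGraph V) ((Dstar \ R1) ∪ {u}) := by
      rw [hB] at hyB; exact hyB.2
    ext z
    simp only [Set.mem_inter_iff, Set.mem_singleton_iff]
    constructor
    · rintro ⟨hzN, hz⟩
      rcases hz with hz | hz
      · exact absurd ((hmem _ _).2 ⟨z, hz, hsym _ _ hzN⟩) hyBnot
      · rcases eq_or_ne z x' with h | h
        · exact h
        · exact absurd ((hmem (X \ {x'}) y).2 ⟨z, ⟨hz, h⟩, hsym _ _ hzN⟩) hyN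
    · rintro rfl
      exact ⟨hsym _ _ hyx', Or.inr hx'⟩
end

section
/- Let P = (V, ≤) be a finite poset with realizer ≤_1, …, ≤_d and let G be the incomparability graph of P. Let I be an irredundant set of G with |I| ≥ 3d, with first layer A(I) = (a_1,…,a_d), second layer B(I) = (b_1,…,b_d), third layer C(I) = (c_1,…,c_d), and border T(I) the set of entries of these three layers. Let u ∈ I ∖ T(I) and let v ∈ priv(I, u) with v ≠ u. Then v < b_k in P for every k ∈ {1,…,d}. -/
open Set

/-- Let `P` be a finite poset realized by linear orders `lin 1, …, lin d`, `G` its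
incomparability graph, and `I` an irredundant set of `G` with `|I| ≥ 3d`, with layers
`a, b, c` forming the border `T(I)`.  For every `u ∈ I ∖ T(I)` and every
`v ∈ priv(I, u)` with `v ≠ u`, we have `v < b k` in `P` for every `k`. -/
theorem stmt12 {V : Type*} [Fintype V] [PartialOrder V] (d : ℕ)
    (lin : Fin d → LinearOrder V)
    (hreal : ∀ x y : V, x ≤ y ↔ ∀ i : Fin d, (lin i).le x y)
    (I : Set V)
    (hirr : ∀ x ∈ I, privSet (incompGraph V) I x ≠ ∅)
    (hcard : 3 * d ≤ I.ncard)
    (a b c : Fin d → V)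
    (ha : IsLayer lin I a)
    (hb : IsLayer lin (I \ Set.range a) b)
    (hc : IsLayer lin (I \ (Set.range a ∪ Set.range b)) c)
    (u : V) (hu : u ∈ I \ (Set.range a ∪ Set.range b ∪ Set.range c))
    (v : V) (hv : v ∈ privSet (incompGraph V) I u) (hvu : v ≠ u) :
    ∀ k : Fin d, v < b k := by

  have hvset : closedNbhd (incompGraph V) v ∩ I = {u} := hv
  have hvI : v ∉ I := by
    intro h
    have hmem : v ∈ ({u} : Set V) := by
      rw [← hvset]; exact ⟨Set.mem_insert _ _, h⟩
    exact hvu hmem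
  have huN : u ∈ closedNbhd (incompGraph V) v := by
    have : u ∈ ({u} : Set V) := rfl
    rw [← hvset] at this; exact this.1
  have hadj : (incompGraph V).Adj v u := by
    rcases huN with h | h
    · exact absurd h.symm hvu
    · exact h
  have hincomp : ¬ v ≤ u ∧ ¬ u ≤ v := by
    have := (SimpleGraph.fromRel_adj _ v u).mp hadj
    rcases this.2 with h | h
    · exact h
    · exact ⟨h.2, h.1⟩
  have hcomp : ∀ w ∈ I, w ≠ u → (v ≤ w ∨ w ≤ v) := by
    intro w hwI hwu
    have hwN : w ∉ closedNbhd (incompGraph V) v := by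
      intro h
      have : w ∈ ({u} : Set V) := by rw [← hvset]; exact ⟨h, hwI⟩
      exact hwu this
    have hwv : w ≠ v := by rintro rfl; exact hvI hwI
    have hnadj : ¬ (incompGraph V).Adj v w := by
      intro h; exact hwN (Set.mem_insert_of_mem _ h)
    by_contra hcon
    push_neg at hcon
    exact hnadj ((SimpleGraph.fromRel_adj _ v w).mpr
      ⟨fun h => hwv h.symm, Or.inl ⟨hcon.1, hcon.2⟩⟩)
  have hunotabc : u ∉ Set.range a ∪ Set.range b ∪ Set.range c := hu.2
  intro k
  by_contra hvbk
  -- b k properties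
  have hbk := hb k
  have hbkI : b k ∈ I := hbk.1.1.1
  have hbku : b k ≠ u := by
    rintro rfl
    exact hunotabc (Or.inl (Or.inr ⟨k, rfl⟩))
  have hbkv : b k ≤ v := by
    rcases hcomp (b k) hbkI hbku with h | h
    · exact absurd (lt_of_le_of_ne h (by rintro rfl; exact hvI hbkI)) hvbk
    · exact h
  -- every c j satisfies c j ≤ v
  have hcjv : ∀ j : Fin d, c j ≤ v := by
    intro j
    have hcj := hc j
    have hcjI : c j ∈ I := hcj.1.1.1
    have hcjnab : c j ∉ Set.range a ∪ Set.range b := hcj.1.1.2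
    have hcju : c j ≠ u := by
      rintro rfl
      exact hunotabc (Or.inr ⟨j, rfl⟩)
    rcases hcomp (c j) hcjI hcju with h | h
    · exfalso
      have h1 : b k ≤ c j := le_trans hbkv h
      have h2 : (lin k).le (b k) (c j) := (hreal _ _).mp h1 k
      have h3 : (lin k).le (c j) (b k) := by
        refine hbk.2 (c j) ⟨⟨hcjI, fun hra => hcjnab (Or.inl hra)⟩, ?_⟩
        rintro ⟨m, _, hm⟩
        exact hcjnab (Or.inr ⟨m, hm⟩)
      have : b k = c j := (lin k).le_antisymm _ _ h2 h3
      exact hcjnab (Or.inr ⟨k, this⟩)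
    · exact h
  -- conclude u ≤ v
  have huv : u ≤ v := by
    rw [hreal]
    intro j
    have h1 : (lin j).le u (c j) := by
      refine (hc j).2 u ⟨⟨hu.1, fun hab => hunotabc (Or.inl hab)⟩, ?_⟩
      rintro ⟨m, _, hm⟩
      exact hunotabc (Or.inr ⟨m, hm⟩)
    have h2 : (lin j).le (c j) v := (hreal _ _).mp (hcjv j) j
    exact (lin j).le_trans _ _ _ h1 h2
  exact hincomp.2 huv
end

section
/- Let H be a finite hypergraph and let t ≥ 1 be an integer. Suppose X ⊆ V(H) is of minimum cardinality among all sets that are contained in no hyperedge of H but every subset of which of cardinality at most t−1 is contained in some hyperedge of H. Then |X| ≥ t, and for every x ∈ X there exists a hyperedge E of H with E ∩ X = X ∖ {x}. -/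
open Set

/-- Let `H` be a finite hypergraph with hyperedge family `E` and `t ≥ 1`.  If `X` is of
minimum cardinality among all sets contained in no hyperedge but all of whose subsets of
cardinality at most `t - 1` are contained in some hyperedge, then `|X| ≥ t` and for every
`x ∈ X` there is a hyperedge `S` with `S ∩ X = X ∖ {x}`. -/
theorem stmt15 {α : Type*} [Fintype α] (E : Set (Set α)) (t : ℕ) (ht : 1 ≤ t)
    (X : Set α)
    (hX : (¬ ∃ S ∈ E, X ⊆ S) ∧ ∀ Y ⊆ X, Y.ncard ≤ t - 1 → ∃ S ∈ E, Y ⊆ S)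
    (hmin : ∀ X' : Set α, (¬ ∃ S ∈ E, X' ⊆ S) →
      (∀ Y ⊆ X', Y.ncard ≤ t - 1 → ∃ S ∈ E, Y ⊆ S) → X.ncard ≤ X'.ncard) :
    t ≤ X.ncard ∧ ∀ x ∈ X, ∃ S ∈ E, S ∩ X = X \ {x} := by
  obtain ⟨hX1, hX2⟩ := hX
  constructor
  · by_contra h
    push_neg at h
    exact hX1 (hX2 X subset_rfl (by omega))
  · intro x hx
    have hXfin : X.Finite := X.toFinite
    have hlt : (X \ {x}).ncard < X.ncard := by
      apply Set.ncard_lt_ncard _ hXfin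
      constructor
      · exact diff_subset
      · intro hsub
        exact (hsub hx).2 rfl
    -- X \ {x} must be contained in some edge
    by_cases hS : ∃ S ∈ E, X \ {x} ⊆ S
    · obtain ⟨S, hSE, hSsub⟩ := hS
      refine ⟨S, hSE, ?_⟩
      apply Subset.antisymm
      · intro y ⟨hyS, hyX⟩
        refine ⟨hyX, ?_⟩
        intro hyx
        simp only [mem_singleton_iff] at hyx
        apply hX1
        refine ⟨S, hSE, ?_⟩
        intro z hz
        by_cases hzx : z = x
        · subst hzx; exact hyx ▸ hyS
        · exact hSsub ⟨hz, hzx⟩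
      · intro y hy
        exact ⟨hSsub hy, hy.1⟩
    · exfalso
      have := hmin (X \ {x}) hS (fun Y hY hYc => hX2 Y (hY.trans diff_subset) hYc)
      omega
end
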